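/- Let V : ℝ → ℝ be any function, let n : ℝ → ℝ be differentiable, and let B > 0 and F ≥ 0 be real constants. Define δ(t, x) = n(t)·exp(−x/B) for all t and all x ≥ 0. Then δ satisfies the bathtub transport equation ∂_t δ(t, x) − V(n(t))·∂_x δ(t, x) = F·exp(−x/B) for all t and all x ≥ 0 if and only if n satisfies the ordinary differential equation n'(t) = F − n(t)·V(n(t))/B for all t. -/
import Mathlib


open Real

lemma spatial_deriv (c B : ℝ) (x : ℝ) :
    deriv (fun y : ℝ => c * Real.exp (-y / B)) x
      = c * (Real.exp (-x / B) * (-1 / B)) := by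
  have h : HasDerivAt (fun y : ℝ => c * Real.exp (-y / B))
      (c * (Real.exp (-x / B) * (-1 / B))) x := by
    have h1 : HasDerivAt (fun y : ℝ => -y / B) (-1 / B) x :=
      ((hasDerivAt_id x).neg.div_const B)
    exact (h1.exp.const_mul c)
  exact h.deriv

/-- For the exponential trip-length profile `δ(t, x) = n(t)·exp(−x/B)`, the
bathtub transport equation `∂_t δ − V(n(t))·∂_x δ = F·exp(−x/B)` holds for all
`t` and all `x ≥ 0` if and only if `n` solves the bathtub ODE
`n'(t) = F − n(t)·V(n(t))/B`. -/
theorem exponential_profile_reduces_bathtub_pde_to_ode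
    (V : ℝ → ℝ) (n : ℝ → ℝ) (hn : Differentiable ℝ n)
    (B F : ℝ) (hB : 0 < B) (hF : 0 ≤ F) :
    (∀ t : ℝ, ∀ x : ℝ, 0 ≤ x →
        deriv (fun τ : ℝ => n τ * Real.exp (-x / B)) t
          - V (n t) * deriv (fun y : ℝ => n t * Real.exp (-y / B)) x
        = F * Real.exp (-x / B)) ↔
    (∀ t : ℝ, deriv n t = F - n t * V (n t) / B) := by
  have hBne : B ≠ 0 := ne_of_gt hB
  have key : ∀ t x : ℝ,
      deriv (fun τ : ℝ => n τ * Real.exp (-x / B)) t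
        - V (n t) * deriv (fun y : ℝ => n t * Real.exp (-y / B)) x
      = (deriv n t + n t * V (n t) / B) * Real.exp (-x / B) := by
    intro t x
    rw [deriv_mul_const (hn t), spatial_deriv]
    ring
  constructor
  · intro h t
    have := h t 0 le_rfl
    rw [key] at this
    have hexp : Real.exp (-(0:ℝ) / B) ≠ 0 := Real.exp_ne_zero _
    have := mul_right_cancel₀ hexp this
    linarith
  · intro h t x hx
    rw [key, h t]
    ring
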